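/- arXiv:2002.11880 — 5 statements merged into one kernel-verified Lean document; each statement's English description precedes it below -/
import Mathlib

section
/- Let t_e = Σ_{i=1}^R X_i be a sum of R independent Bernoulli(q) random variables, and define f_e = t_e/R if t_e/R ≤ 1/√(εR) and f_e = 0 otherwise, where Rq < 1 and ε ∈ (0,1). Then E[f_e] ≤ q and E[f_e] ≥ (1-ε)q. -/
open MeasureTheory ProbabilityTheory

set_option maxHeartbeats 2000000 in
/-- With `t_e = Σ_{i=1}^R X_i` a sum of `R` independent Bernoulli(q)
variables, `R·q < 1`, and `f_e = t_e/R` if `t_e/R ≤ 1/√(εR)` and `0` otherwise, one has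
`E[f_e] ≤ q` and `E[f_e] ≥ (1-ε)q`. -/
theorem stmt_4 {Ω : Type*} [MeasurableSpace Ω] (μ : Measure Ω) [IsProbabilityMeasure μ]
    (R : ℕ) (hR : 0 < R) (q ε : ℝ) (hq0 : 0 ≤ q) (hq1 : q ≤ 1)
    (hRq : (R : ℝ) * q < 1) (hε : 0 < ε) (hε1 : ε < 1)
    (X : Fin R → Ω → ℝ)
    (hmeas : ∀ i, Measurable (X i))
    (hber : ∀ i ω, X i ω = 0 ∨ X i ω = 1)
    (hmean : ∀ i, ∫ ω, X i ω ∂μ = q)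
    (hind : iIndepFun X μ) :
    (∫ ω, (if (∑ i, X i ω) / R ≤ 1 / Real.sqrt (ε * R) then (∑ i, X i ω) / R else 0) ∂μ) ≤ q ∧
    (1 - ε) * q ≤
      ∫ ω, (if (∑ i, X i ω) / R ≤ 1 / Real.sqrt (ε * R) then (∑ i, X i ω) / R else 0) ∂μ := by
  classical
  have hR0 : (0:ℝ) < R := by exact_mod_cast hR
  have hR1 : (1:ℝ) ≤ R := by exact_mod_cast hR
  -- basic Bernoulli facts
  have hX0 : ∀ i ω, 0 ≤ X i ω := fun i ω => by rcases hber i ω with h | h <;> simp [h]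
  have hX1 : ∀ i ω, X i ω ≤ 1 := fun i ω => by rcases hber i ω with h | h <;> simp [h]
  have hXint : ∀ i, Integrable (X i) μ := fun i =>
    (integrable_const (1:ℝ)).mono' (hmeas i).aestronglyMeasurable
      (Filter.Eventually.of_forall fun ω => by
        rw [Real.norm_eq_abs, abs_le]; exact ⟨by linarith [hX0 i ω], hX1 i ω⟩)
  have ht_meas : Measurable fun ω => ∑ i, X i ω :=
    Finset.measurable_sum _ fun i _ => hmeas i
  have ht0 : ∀ ω, 0 ≤ ∑ i, X i ω := fun ω =>
    Finset.sum_nonneg fun i _ => hX0 i ω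
  have htR : ∀ ω, (∑ i, X i ω) ≤ R := fun ω => by
    calc (∑ i, X i ω) ≤ ∑ _i : Fin R, (1:ℝ) :=
          Finset.sum_le_sum fun i _ => hX1 i ω
      _ = R := by simp
  have ht_nat : ∀ ω, ∃ n : ℕ, (∑ i, X i ω) = n := by
    intro ω
    refine ⟨(Finset.univ.filter fun i => X i ω = 1).card, ?_⟩
    rw [Finset.card_filter]
    push_cast
    refine Finset.sum_congr rfl fun i _ => ?_
    rcases hber i ω with h | h <;> simp [h]
  have htint : Integrable (fun ω => ∑ i, X i ω) μ :=
    integrable_finset_sum _ fun i _ => hXint i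
  have hEt : ∫ ω, (∑ i, X i ω) ∂μ = R * q := by
    rw [integral_finset_sum _ fun i _ => hXint i]
    simp [hmean, Finset.card_univ, nsmul_eq_mul]
  -- s, u
  set s := Real.sqrt (ε * R) with hs_def
  have hs0 : 0 < s := Real.sqrt_pos.mpr (by positivity)
  set u := Real.sqrt ((R:ℝ) / ε) with hu_def
  have hu0 : 0 ≤ u := Real.sqrt_nonneg _
  have hsu : s * u = R := by
    rw [hs_def, hu_def, ← Real.sqrt_mul (by positivity)]
    rw [show ε * (R:ℝ) * ((R:ℝ) / ε) = (R:ℝ)^2 by field_simp]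
    exact Real.sqrt_sq hR0.le
  have hu2 : u ^ 2 = (R:ℝ) / ε := Real.sq_sqrt (by positivity)
  have hu1 : 1 ≤ u := by
    rw [hu_def]
    rw [show (1:ℝ) = Real.sqrt 1 by simp]
    exact Real.sqrt_le_sqrt (by rw [le_div_iff₀ hε]; linarith)
  have hcond : ∀ x : ℝ, (x / R ≤ 1 / s ↔ x ≤ u) := by
    intro x
    rw [div_le_div_iff₀ hR0 hs0, one_mul, ← hsu, mul_comm s u, mul_le_mul_iff_of_pos_right hs0]
  -- integrability of the truncated function
  have hf_meas : Measurable fun ω =>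
      (if (∑ i, X i ω) / R ≤ 1 / s then (∑ i, X i ω) / R else 0) := by
    exact Measurable.ite (measurableSet_le (ht_meas.div_const _) measurable_const)
      (ht_meas.div_const _) measurable_const
  have hf_int : Integrable (fun ω =>
      (if (∑ i, X i ω) / R ≤ 1 / s then (∑ i, X i ω) / R else 0)) μ := by
    refine (integrable_const (1:ℝ)).mono' hf_meas.aestronglyMeasurable
      (Filter.Eventually.of_forall fun ω => ?_)
    rw [Real.norm_eq_abs, abs_le]
    by_cases h : (∑ i, X i ω) / R ≤ 1 / s <;> simp only [h, if_true, if_false, ite_true, ite_false]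
    · constructor
      · linarith [div_nonneg (ht0 ω) hR0.le]
      · rw [div_le_one hR0]; exact htR ω
    · norm_num
  -- upper bound
  have hupper : (∫ ω, (if (∑ i, X i ω) / R ≤ 1 / s then (∑ i, X i ω) / R else 0) ∂μ) ≤ q := by
    have h1 : (∫ ω, (if (∑ i, X i ω) / R ≤ 1 / s then (∑ i, X i ω) / R else 0) ∂μ)
        ≤ ∫ ω, (∑ i, X i ω) / R ∂μ := by
      refine integral_mono hf_int (htint.div_const _) fun ω => ?_
      by_cases h : (∑ i, X i ω) / R ≤ 1 / s <;>
        simp only [h, if_true, if_false, ite_true, ite_false]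
      · exact le_refl _
      · exact div_nonneg (ht0 ω) hR0.le
    have h2 : ∫ ω, (∑ i, X i ω) / R ∂μ = q := by
      rw [integral_div, hEt]; field_simp
    linarith
  refine ⟨hupper, ?_⟩
  -- lower bound
  by_cases hcase : (R:ℝ) ≤ u
  · -- trivial case: truncation never happens
    have heq : (∫ ω, (if (∑ i, X i ω) / R ≤ 1 / s then (∑ i, X i ω) / R else 0) ∂μ)
        = ∫ ω, (∑ i, X i ω) / R ∂μ :=
      integral_congr_ae (Filter.Eventually.of_forall fun ω =>
        if_pos ((hcond _).mpr (le_trans (htR ω) hcase)))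
    rw [heq, integral_div, hEt]
    rw [show (R:ℝ) * q / R = q by field_simp]
    nlinarith [mul_nonneg hε.le hq0]
  · push_neg at hcase
    set m : ℕ := ⌊u⌋₊ with hm_def
    have hmu : (m:ℝ) ≤ u := Nat.floor_le hu0
    have hum : u < (m:ℝ) + 1 := Nat.lt_floor_add_one u
    have hm1 : (1:ℝ) ≤ m := by exact_mod_cast Nat.le_floor (by exact_mod_cast hu1)
    have hm0 : (0:ℝ) < m := by linarith
    have hmR : (m:ℝ) + 1 ≤ R := by
      have : m < R := by exact_mod_cast lt_of_le_of_lt hmu hcase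
      exact_mod_cast this
    -- second moment
    have hXXint : ∀ i j : Fin R, Integrable (fun ω => X i ω * X j ω) μ := fun i j =>
      (integrable_const (1:ℝ)).mono' ((hmeas i).mul (hmeas j)).aestronglyMeasurable
        (Filter.Eventually.of_forall fun ω => by
          rw [Real.norm_eq_abs, abs_le]
          constructor
          · nlinarith [hX0 i ω, hX0 j ω]
          · nlinarith [hX0 i ω, hX0 j ω, hX1 i ω, hX1 j ω])
    have hEXX : ∀ i j : Fin R, i ≠ j → ∫ ω, X i ω * X j ω ∂μ = q * q := by
      intro i j hij
      have h := IndepFun.integral_mul_eq_mul_integral (hind.indepFun hij) (hXint i).aestronglyMeasurable (hXint j).aestronglyMeasurable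
      calc ∫ ω, X i ω * X j ω ∂μ = ∫ ω, (X i * X j) ω ∂μ := by simp [Pi.mul_apply]
        _ = (∫ ω, X i ω ∂μ) * ∫ ω, X j ω ∂μ := h
        _ = q * q := by rw [hmean i, hmean j]
    have hEXsq : ∀ i : Fin R, ∫ ω, X i ω * X i ω ∂μ = q := by
      intro i
      have : ∀ ω, X i ω * X i ω = X i ω := fun ω => by
        rcases hber i ω with h | h <;> simp [h]
      rw [integral_congr_ae (Filter.Eventually.of_forall this), hmean i]
    have htsq_int : Integrable (fun ω => (∑ i, X i ω) * (∑ i, X i ω)) μ :=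
      (integrable_const ((R:ℝ) * R)).mono' (ht_meas.mul ht_meas).aestronglyMeasurable
        (Filter.Eventually.of_forall fun ω => by
          rw [Real.norm_eq_abs, abs_le]
          constructor
          · nlinarith [ht0 ω]
          · nlinarith [ht0 ω, htR ω])
    have hEt2 : ∫ ω, (∑ i, X i ω) * (∑ i, X i ω) ∂μ = R * q + (R * ((R:ℝ) - 1)) * (q * q) := by
      have expand : ∀ ω : Ω, (∑ i, X i ω) * (∑ i, X i ω) = ∑ i, ∑ j, X i ω * X j ω := by
        intro ω; rw [Finset.sum_mul_sum]
      rw [integral_congr_ae (Filter.Eventually.of_forall expand)]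
      rw [integral_finset_sum _ fun i _ => integrable_finset_sum _ fun j _ => hXXint i j]
      have hrow : ∀ i : Fin R, (∫ ω, ∑ j, X i ω * X j ω ∂μ) = q + ((R:ℝ) - 1) * (q * q) := by
        intro i
        rw [integral_finset_sum _ fun j _ => hXXint i j]
        rw [← Finset.add_sum_erase _ _ (Finset.mem_univ i), hEXsq i]
        have : ∑ j ∈ Finset.univ.erase i, ∫ ω, X i ω * X j ω ∂μ
            = ∑ _j ∈ Finset.univ.erase i, q * q :=
          Finset.sum_congr rfl fun j hj => hEXX i j (Ne.symm (Finset.ne_of_mem_erase hj))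
        rw [this, Finset.sum_const, Finset.card_erase_of_mem (Finset.mem_univ i),
          Finset.card_univ, Fintype.card_fin, nsmul_eq_mul]
        rw [Nat.cast_sub hR]
        norm_num
      rw [Finset.sum_congr rfl fun i _ => hrow i, Finset.sum_const, Finset.card_univ,
        Fintype.card_fin, nsmul_eq_mul]
      ring
    -- the correction term
    have hgfun : (fun ω => (∑ i, X i ω) * ((∑ i, X i ω) - 1) / ((R:ℝ) * m))
        = fun ω => ((∑ i, X i ω) * (∑ i, X i ω) - (∑ i, X i ω)) / ((R:ℝ) * m) := by
      funext ω; ring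
    have hg_int : Integrable (fun ω => (∑ i, X i ω) * ((∑ i, X i ω) - 1) / ((R:ℝ) * m)) μ := by
      rw [hgfun]; exact (htsq_int.sub htint).div_const _
    have hEg : ∫ ω, (∑ i, X i ω) * ((∑ i, X i ω) - 1) / ((R:ℝ) * m) ∂μ
        = (R * ((R:ℝ) - 1)) * (q * q) / ((R:ℝ) * m) := by
      rw [hgfun, integral_div, integral_sub htsq_int htint, hEt2, hEt]
      ring_nf
    -- pointwise bound
    have hkey : ∀ ω, (∑ i, X i ω) / R - (∑ i, X i ω) * ((∑ i, X i ω) - 1) / ((R:ℝ) * m)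
        ≤ (if (∑ i, X i ω) / R ≤ 1 / s then (∑ i, X i ω) / R else 0) := by
      intro ω
      obtain ⟨n, hn⟩ := ht_nat ω
      by_cases h : (∑ i, X i ω) / R ≤ 1 / s
      · simp only [h, if_true, ite_true]
        have hnn : (0:ℝ) ≤ (∑ i, X i ω) * ((∑ i, X i ω) - 1) := by
          rw [hn]
          rcases Nat.eq_zero_or_pos n with h0 | h0
          · simp [h0]
          · have : (1:ℝ) ≤ n := by exact_mod_cast h0
            nlinarith
        have : (0:ℝ) ≤ (∑ i, X i ω) * ((∑ i, X i ω) - 1) / ((R:ℝ) * m) := by positivity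
        linarith
      · simp only [h, if_false, ite_false]
        rw [hcond] at h
        push_neg at h
        have hn1 : (m:ℝ) + 1 ≤ n := by
          have : m < n := by exact_mod_cast lt_of_le_of_lt hmu (hn ▸ h)
          exact_mod_cast this
        rw [hn, sub_nonpos, div_le_div_iff₀ hR0 (by positivity)]
        have hn0 : (0:ℝ) ≤ n := Nat.cast_nonneg n
        nlinarith [mul_nonneg (mul_nonneg hn0 hR0.le) (show (0:ℝ) ≤ (n:ℝ) - 1 - m by linarith)]
    -- integrate the pointwise bound
    have hlow : q - (R * ((R:ℝ) - 1)) * (q * q) / ((R:ℝ) * m)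
        ≤ ∫ ω, (if (∑ i, X i ω) / R ≤ 1 / s then (∑ i, X i ω) / R else 0) ∂μ := by
      have hABint : Integrable (fun ω =>
          (∑ i, X i ω) / (R:ℝ) - (∑ i, X i ω) * ((∑ i, X i ω) - 1) / ((R:ℝ) * m)) μ := by
        exact (htint.div_const _).sub hg_int
      have h1 := integral_mono hABint hf_int hkey
      have hsub : ∫ ω, ((∑ i, X i ω) / (R:ℝ)
            - (∑ i, X i ω) * ((∑ i, X i ω) - 1) / ((R:ℝ) * m)) ∂μ
          = (R:ℝ) * q / R - (R * ((R:ℝ) - 1)) * (q * q) / ((R:ℝ) * m) := by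
        rw [integral_sub (htint.div_const _) hg_int, integral_div, hEt, hEg]
      rw [hsub] at h1
      have hRqR : (R:ℝ) * q / R = q := by field_simp
      rw [hRqR] at h1
      exact h1
    -- arithmetic: the correction term is at most ε q
    have hA : (R:ℝ) ≤ ε * ((m:ℝ) + 1) ^ 2 := by
      have h2 : ε * u ^ 2 = R := by rw [hu2]; field_simp
      have h3 : 0 ≤ ε * (((m:ℝ) + 1) - u) * (((m:ℝ) + 1) + u) :=
        mul_nonneg (mul_nonneg hε.le (by linarith)) (by linarith)
      nlinarith [h3, h2]
    have hpoly : ((R:ℝ) - 1) * ((m:ℝ) + 1) ^ 2 ≤ (R:ℝ) ^ 2 * m := by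
      have d0 : (0:ℝ) ≤ (R:ℝ) - ((m:ℝ) + 1) := by linarith
      have e0 : (0:ℝ) ≤ (m:ℝ) ^ 2 - 1 + (m:ℝ) * ((R:ℝ) - ((m:ℝ) + 1)) := by
        nlinarith [mul_nonneg hm0.le d0, hm1]
      nlinarith [mul_nonneg d0 e0]
    have hcorr : (R * ((R:ℝ) - 1)) * (q * q) / ((R:ℝ) * m) ≤ ε * q := by
      rw [div_le_iff₀ (by positivity)]
      have P1 : 0 ≤ q * (R:ℝ) * m * (ε * ((m:ℝ) + 1) ^ 2 - R) :=
        mul_nonneg (by positivity) (by linarith)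
      have P2 : 0 ≤ q * ((R:ℝ) ^ 2 * m - ((R:ℝ) - 1) * ((m:ℝ) + 1) ^ 2) :=
        mul_nonneg hq0 (by linarith)
      have P3 : 0 ≤ (q * (((R:ℝ) - 1) * ((m:ℝ) + 1) ^ 2)) * (1 - (R:ℝ) * q) :=
        mul_nonneg (mul_nonneg hq0 (mul_nonneg (by linarith) (by positivity))) (by linarith)
      have hmul : (R * ((R:ℝ) - 1)) * (q * q) * (((m:ℝ) + 1) ^ 2)
          ≤ (ε * q * ((R:ℝ) * m)) * (((m:ℝ) + 1) ^ 2) := by nlinarith [P1, P2, P3]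
      exact le_of_mul_le_mul_right hmul (by positivity)
    linarith
end

section
/- Let C be a graph with maximum degree Δ_C, τ₋, τ₊ ∈ (0,1), q : E → [0,1], N' ⊆ N where N is a set of 'non-crucial' edges with q_e ≤ τ₋ and N \ N' consists of non-crucial edges {u,v} with d_C(u,v) < λ, and C a set of 'crucial' edges with q_e ≥ τ₊ for each e ∈ C. If Δ_C ≤ 1/τ₊ and 4τ₋(1/τ₊)^{2λ+1} ≤ ε, then q(N') ≥ q(N) − ε·q(C), where q(S) = Σ_{e∈S} q_e. -/
open scoped Classical

namespace Stmt7Aux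

open Finset SimpleGraph

variable {V : Type*} [Fintype V] [DecidableEq V] (C : SimpleGraph V) [DecidableRel C.Adj]

noncomputable def sph (u : V) (k : ℕ) : Finset V :=
  Finset.univ.filter (fun v => C.Reachable u v ∧ C.dist u v = k)

noncomputable def ball (u : V) (r : ℕ) : Finset V :=
  Finset.univ.filter (fun v => C.Reachable u v ∧ C.dist u v ≤ r)

lemma exists_pred {u v : V} {k : ℕ} (hr : C.Reachable u v) (hd : C.dist u v = k + 1) :
    ∃ w, C.Adj w v ∧ C.Reachable u w ∧ C.dist u w = k := by
  obtain ⟨p, hp⟩ := hr.symm.exists_walk_length_eq_dist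
  rw [SimpleGraph.dist_comm] at hp
  cases p with
  | nil =>
    rw [SimpleGraph.dist_self] at hd
    omega
  | @cons _ w _ h q =>
    simp only [SimpleGraph.Walk.length_cons] at hp
    rw [hd] at hp
    have hql : q.reverse.length = k := by
      rw [SimpleGraph.Walk.length_reverse]; omega
    have hle : C.dist u w ≤ k := hql ▸ SimpleGraph.dist_le q.reverse
    have hge : k ≤ C.dist u w := by
      obtain ⟨p', hp'⟩ := (SimpleGraph.Reachable.exists_walk_length_eq_dist (Nonempty.intro q.reverse))
      have hdd := SimpleGraph.dist_le (p'.concat h.symm)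
      rw [SimpleGraph.Walk.length_concat, hp'] at hdd
      omega
    exact ⟨w, h.symm, (Nonempty.intro q.reverse : C.Reachable u w), le_antisymm hle hge⟩

lemma card_sph_le (u : V) (k : ℕ) : (sph C u k).card ≤ C.maxDegree ^ k := by
  induction k with
  | zero =>
    have hsub : sph C u 0 ⊆ {u} := by
      intro v hv
      simp only [sph, Finset.mem_filter, Finset.mem_univ, true_and] at hv
      simp [(hv.1.dist_eq_zero_iff.1 hv.2).symm]
    simpa using Finset.card_le_card hsub
  | succ k ih =>
    have hsub : sph C u (k + 1) ⊆ (sph C u k).biUnion (fun w => C.neighborFinset w) := by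
      intro v hv
      simp only [sph, Finset.mem_filter, Finset.mem_univ, true_and] at hv
      obtain ⟨w, hadj, hrw, hdw⟩ := exists_pred C hv.1 hv.2
      refine Finset.mem_biUnion.2 ⟨w, ?_, ?_⟩
      · simp [sph, hrw, hdw]
      · simpa [SimpleGraph.mem_neighborFinset] using hadj
    calc (sph C u (k + 1)).card ≤ ((sph C u k).biUnion (fun w => C.neighborFinset w)).card :=
          Finset.card_le_card hsub
      _ ≤ ∑ w ∈ sph C u k, (C.neighborFinset w).card := Finset.card_biUnion_le
      _ ≤ ∑ _w ∈ sph C u k, C.maxDegree :=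
          Finset.sum_le_sum fun w _ => C.degree_le_maxDegree w
      _ = (sph C u k).card * C.maxDegree := by rw [Finset.sum_const, smul_eq_mul]
      _ ≤ C.maxDegree ^ k * C.maxDegree := Nat.mul_le_mul_right _ ih
      _ = C.maxDegree ^ (k + 1) := (pow_succ _ _).symm

lemma card_ball_le (u : V) (r : ℕ) :
    (ball C u r).card ≤ ∑ k ∈ Finset.range (r + 1), C.maxDegree ^ k := by
  have hsub : ball C u r ⊆ (Finset.range (r + 1)).biUnion (fun k => sph C u k) := by
    intro v hv
    simp only [ball, Finset.mem_filter, Finset.mem_univ, true_and] at hv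
    exact Finset.mem_biUnion.2 ⟨C.dist u v, Finset.mem_range.2 (by omega),
      by simp [sph, hv.1]⟩
  calc (ball C u r).card ≤ _ := Finset.card_le_card hsub
    _ ≤ ∑ k ∈ Finset.range (r + 1), (sph C u k).card := Finset.card_biUnion_le
    _ ≤ _ := Finset.sum_le_sum fun k _ => card_sph_le C u k

lemma geom_le {d : ℕ} (hd : 2 ≤ d) (r : ℕ) :
    ∑ k ∈ Finset.range (r + 1), d ^ k ≤ 2 * d ^ r := by
  induction r with
  | zero => simp
  | succ r ih =>
    rw [Finset.sum_range_succ]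
    have h1 : d ^ r * 2 ≤ d ^ (r + 1) := by
      rw [pow_succ]; exact Nat.mul_le_mul_left _ hd
    linarith

end Stmt7Aux
/-- With `C` the graph of crucial edges (`q_e ≥ τ₊` for `e ∈ C`), `N` a set
of non-crucial edges (`q_e ≤ τ₋`), `N' ⊆ N` such that every edge `{u,v} ∈ N ∖ N'` has
`1 ≤ d_C(u,v) < λ`, if the maximum degree of `C` is at most `1/τ₊` and
`4τ₋(1/τ₊)^{2λ+1} ≤ ε`, then `q(N') ≥ q(N) − ε·q(C)`. -/
theorem stmt_7 {V : Type*} [Fintype V] [DecidableEq V]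
    (C : SimpleGraph V) [DecidableRel C.Adj]
    (q : Sym2 V → ℝ) (τm τp ε : ℝ) (lam : ℕ)
    (hτm : 0 < τm) (hτp : 0 < τp) (hlam : 1 ≤ lam)
    (hq : ∀ e : Sym2 V, 0 ≤ q e ∧ q e ≤ 1)
    (hcru : ∀ e ∈ C.edgeFinset, τp ≤ q e)
    (hdeg : (C.maxDegree : ℝ) ≤ 1 / τp)
    (N N' : Finset (Sym2 V)) (hsub : N' ⊆ N)
    (hN : ∀ e ∈ N, q e ≤ τm)
    (hfar : ∀ e ∈ N \ N', ∀ u v : V, e = s(u, v) →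
      u ≠ v ∧ C.Reachable u v ∧ 1 ≤ C.dist u v ∧ C.dist u v < lam)
    (hε : 4 * τm * (1 / τp) ^ (2 * lam + 1) ≤ ε) :
    (∑ e ∈ N, q e) - ε * (∑ e ∈ C.edgeFinset, q e) ≤ ∑ e ∈ N', q e := by
  classical
  set D := N \ N' with hD
  have hε0 : 0 ≤ ε := le_trans (by positivity) hε
  have hqC : 0 ≤ ∑ e ∈ C.edgeFinset, q e :=
    Finset.sum_nonneg fun e _ => (hq e).1
  have hsumD : ∑ e ∈ D, q e ≤ ε * ∑ e ∈ C.edgeFinset, q e := by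
    by_cases hDe : D.Nonempty
    swap
    · rw [Finset.not_nonempty_iff_eq_empty.1 hDe]
      simpa using mul_nonneg hε0 hqC
    -- τp ≤ 1 since C has an edge
    have hτp1 : τp ≤ 1 := by
      obtain ⟨e₀, he₀⟩ := hDe
      revert he₀
      induction e₀ using Sym2.ind with
      | _ u v =>
        intro he₀
        obtain ⟨hne, hr, -, -⟩ := hfar _ he₀ u v rfl
        obtain ⟨p, -⟩ := hr.exists_walk_length_eq_dist
        cases p with
        | nil => exact absurd rfl hne
        | @cons _ b _ h p' =>
          have hm : s(u, b) ∈ C.edgeFinset :=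
            SimpleGraph.mem_edgeFinset.2 (C.mem_edgeSet.2 h)
          exact le_trans (hcru _ hm) (hq _).2
    have hx1 : (1 : ℝ) ≤ 1 / τp := by
      rw [le_div_iff₀ hτp]; linarith
    have hxpow : (1 : ℝ) ≤ (1 / τp) ^ (2 * lam) := by calc (1:ℝ) = 1 ^ (2 * lam) := (one_pow _).symm
      _ ≤ (1 / τp) ^ (2 * lam) := pow_le_pow_left₀ one_pos.le hx1 _
    have hcount : (D.card : ℝ) ≤ 4 * (1 / τp) ^ (2 * lam) * C.edgeFinset.card := by
      by_cases h2 : 2 ≤ C.maxDegree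
      · -- charging argument
        have hkey : ∀ e : Sym2 V, ∃ u v w : V, e = s(u, v) ∧
            (e ∈ D → C.Adj u w ∧ C.Reachable u v ∧ C.dist u v ≤ lam - 1) := by
          intro e
          induction e using Sym2.ind with
          | _ u v =>
            by_cases he : s(u, v) ∈ D
            · obtain ⟨hne, hr, h1, hlt⟩ := hfar _ he u v rfl
              obtain ⟨p, -⟩ := hr.exists_walk_length_eq_dist
              cases p with
              | nil => exact absurd rfl hne
              | @cons _ b _ h p' =>
                exact ⟨u, v, b, rfl, fun _ => ⟨h, hr, Nat.le_pred_of_lt hlt⟩⟩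
            · exact ⟨u, v, u, rfl, fun h => absurd h he⟩
        choose fu fv fw hrep hprop using hkey
        set F : Sym2 V → Sym2 V := fun e => s(fu e, fw e) with hF
        have hFmem : ∀ e ∈ D, F e ∈ C.edgeFinset := fun e he =>
          SimpleGraph.mem_edgeFinset.2 (C.mem_edgeSet.2 (hprop e he).1)
        have hfiber : ∀ f ∈ C.edgeFinset,
            (D.filter (fun e => F e = f)).card ≤ 4 * C.maxDegree ^ (lam - 1) := by
          intro f
          induction f using Sym2.ind with
          | _ x y =>
            intro hf
            have hsub2 : D.filter (fun e => F e = s(x, y)) ⊆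
                ({x, y} : Finset V).biUnion
                  (fun a => (Stmt7Aux.ball C a (lam - 1)).image (fun b => s(a, b))) := by
              intro e he'
              obtain ⟨heD, hFe⟩ := Finset.mem_filter.1 he'
              obtain ⟨hadj, hre, hdist⟩ := hprop e heD
              have hu : fu e = x ∨ fu e = y := by
                rw [hF] at hFe
                simp only [Sym2.eq_iff] at hFe
                tauto
              refine Finset.mem_biUnion.2 ⟨fu e, ?_, ?_⟩
              · rcases hu with h | h <;> simp [h]
              · refine Finset.mem_image.2 ⟨fv e, ?_, (hrep e).symm⟩
                simp [Stmt7Aux.ball, hre, hdist]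
            calc (D.filter (fun e => F e = s(x, y))).card
                ≤ _ := Finset.card_le_card hsub2
              _ ≤ ∑ a ∈ ({x, y} : Finset V),
                    ((Stmt7Aux.ball C a (lam - 1)).image (fun b => s(a, b))).card :=
                  Finset.card_biUnion_le
              _ ≤ ∑ _a ∈ ({x, y} : Finset V), 2 * C.maxDegree ^ (lam - 1) := by
                  refine Finset.sum_le_sum fun a _ => ?_
                  exact le_trans Finset.card_image_le
                    (le_trans (Stmt7Aux.card_ball_le C a _) (Stmt7Aux.geom_le h2 _))
              _ ≤ 2 * (2 * C.maxDegree ^ (lam - 1)) := by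
                  rw [Finset.sum_const, smul_eq_mul]
                  have : ({x, y} : Finset V).card ≤ 2 := Finset.card_insert_le x {y}
                  exact Nat.mul_le_mul_right _ this
              _ = 4 * C.maxDegree ^ (lam - 1) := by ring
        have hcard : D.card ≤ C.edgeFinset.card * (4 * C.maxDegree ^ (lam - 1)) := by
          rw [Finset.card_eq_sum_card_fiberwise hFmem]
          refine le_trans (Finset.sum_le_sum hfiber) ?_
          rw [Finset.sum_const, smul_eq_mul]
        have h1 : (D.card : ℝ) ≤ (C.edgeFinset.card : ℝ) * (4 * (C.maxDegree : ℝ) ^ (lam - 1)) :=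
          by exact_mod_cast hcard
        have hΔ : (C.maxDegree : ℝ) ^ (lam - 1) ≤ (1 / τp) ^ (2 * lam) := by
          calc (C.maxDegree : ℝ) ^ (lam - 1) ≤ (1 / τp) ^ (lam - 1) :=
                pow_le_pow_left₀ (by positivity) hdeg _
            _ ≤ (1 / τp) ^ (2 * lam) := pow_le_pow_right₀ hx1 (by omega)
        calc (D.card : ℝ) ≤ (C.edgeFinset.card : ℝ) * (4 * (C.maxDegree : ℝ) ^ (lam - 1)) := h1
          _ ≤ (C.edgeFinset.card : ℝ) * (4 * (1 / τp) ^ (2 * lam)) := by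
              refine mul_le_mul_of_nonneg_left ?_ (Nat.cast_nonneg _)
              linarith
          _ = 4 * (1 / τp) ^ (2 * lam) * C.edgeFinset.card := by ring
      · -- max degree ≤ 1 : every edge of D is itself a crucial edge
        push_neg at h2
        have hDsub : D ⊆ C.edgeFinset := by
          intro e he
          revert he
          induction e using Sym2.ind with
          | _ u v =>
            intro he
            obtain ⟨hne, hr, h1, -⟩ := hfar _ he u v rfl
            have hd1 : C.dist u v = 1 := by
              by_contra hne1
              have hge2 : 2 ≤ C.dist u v := by omega
              obtain ⟨p, hp⟩ := hr.exists_walk_length_eq_dist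
              cases p with
              | nil => exact absurd rfl hne
              | @cons _ a _ h p' =>
                cases p' with
                | nil =>
                  simp only [SimpleGraph.Walk.length_cons, SimpleGraph.Walk.length_nil] at hp
                  omega
                | @cons _ b _ h' p'' =>
                  simp only [SimpleGraph.Walk.length_cons] at hp
                  by_cases hub : u = b
                  · subst hub
                    have := SimpleGraph.dist_le p''
                    omega
                  · have hnb : ({u, b} : Finset V) ⊆ C.neighborFinset a := by
                      intro z hz
                      simp only [Finset.mem_insert, Finset.mem_singleton] at hz
                      rcases hz with rfl | rfl
                      · simpa [SimpleGraph.mem_neighborFinset] using h.symm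
                      · simpa [SimpleGraph.mem_neighborFinset] using h'
                    have hdg : 2 ≤ C.degree a := by
                      have := Finset.card_le_card hnb
                      rwa [Finset.card_pair hub] at this
                    have := C.degree_le_maxDegree a
                    omega
            exact SimpleGraph.mem_edgeFinset.2
              (C.mem_edgeSet.2 (SimpleGraph.dist_eq_one_iff_adj.1 hd1))
        have h1 : (D.card : ℝ) ≤ (C.edgeFinset.card : ℝ) := by
          exact_mod_cast Finset.card_le_card hDsub
        nlinarith [Nat.cast_nonneg (α := ℝ) C.edgeFinset.card]
    -- assemble
    have hDq : ∑ e ∈ D, q e ≤ (D.card : ℝ) * τm := by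
      have := Finset.sum_le_card_nsmul D q τm (fun e he => hN e ((Finset.mem_sdiff.1 he).1))
      simpa [nsmul_eq_mul] using this
    have hCq : τp * (C.edgeFinset.card : ℝ) ≤ ∑ e ∈ C.edgeFinset, q e := by
      have := Finset.card_nsmul_le_sum C.edgeFinset q τp hcru
      simpa [nsmul_eq_mul, mul_comm] using this
    calc ∑ e ∈ D, q e ≤ (D.card : ℝ) * τm := hDq
      _ ≤ (4 * (1 / τp) ^ (2 * lam) * C.edgeFinset.card) * τm :=
          mul_le_mul_of_nonneg_right hcount hτm.le
      _ = (4 * τm * (1 / τp) ^ (2 * lam + 1)) * (τp * C.edgeFinset.card) := by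
          rw [pow_succ]
          field_simp
      _ ≤ ε * (τp * C.edgeFinset.card) := by
          refine mul_le_mul_of_nonneg_right hε (by positivity)
      _ ≤ ε * ∑ e ∈ C.edgeFinset, q e := mul_le_mul_of_nonneg_left hCq hε0
  have hsplit : ∑ e ∈ D, q e + ∑ e ∈ N', q e = ∑ e ∈ N, q e := Finset.sum_sdiff hsub
  linarith
end

section
/- Let P = ((𝒞₀,M₀),…,(𝒞_α,M_α)) be a profile (each M_i a matching of graph 𝒞_i) and let I be a collection of vertex-disjoint augmenting hyperwalks of P. Applying all hyperwalks of I to P yields a profile P' = ((𝒞₀,M'₀),…,(𝒞_α,M'_α)) satisfying Σ_{i=0}^α |M'_i| = Σ_{i=0}^α |M_i| + |I|. -/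
open scoped Classical

/-- A hyperwalk of size `k`: a sequence of `k+1` vertices (whose consecutive pairs give the
edges `e₁,…,e_k` of a walk) together with a label `s_j ∈ {0,…,n-1}` for each edge. -/
structure Hyperwalk (V : Type*) (n k : ℕ) where
  verts : Fin (k + 1) → V
  labels : Fin k → Fin n

namespace Hyperwalk

variable {V : Type*} [DecidableEq V] {n k : ℕ}

/-- The `j`-th edge of the hyperwalk. -/
def edge (W : Hyperwalk V n k) (j : Fin k) : Sym2 V :=
  s(W.verts j.castSucc, W.verts j.succ)

/-- Edges in odd positions (`e₁, e₃, …`, i.e. `0`-indexed even positions) carrying label `i`: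
these get added to the matching `M i`. -/
def addSet (W : Hyperwalk V n k) (i : Fin n) : Finset (Sym2 V) :=
  ((Finset.univ : Finset (Fin k)).filter
      (fun j => j.val % 2 = 0 ∧ W.labels j = i)).image W.edge

/-- Edges in even positions carrying label `i`: these get removed from `M i`. -/
def remSet (W : Hyperwalk V n k) (i : Fin n) : Finset (Sym2 V) :=
  ((Finset.univ : Finset (Fin k)).filter
      (fun j => j.val % 2 = 1 ∧ W.labels j = i)).image W.edge

/-- The set of vertices of the hyperwalk. -/
def vertSet (W : Hyperwalk V n k) : Finset V :=
  Finset.univ.image W.verts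

end Hyperwalk

/-- `M` is a matching of the graph (edge set) `Cg`, with no self-loops. -/
def IsMatchingOf {V : Type*} (Cg M : Finset (Sym2 V)) : Prop :=
  M ⊆ Cg ∧ (∀ e ∈ M, ¬ e.IsDiag) ∧
    ∀ e ∈ M, ∀ f ∈ M, ∀ v : V, v ∈ e → v ∈ f → e = f

/-- A profile: each `M i` is a matching of the graph `Cg i`. -/
def IsProfile {V : Type*} {n : ℕ} (Cg M : Fin n → Finset (Sym2 V)) : Prop :=
  ∀ i, IsMatchingOf (Cg i) (M i)

/-- `d_P(v)`: the number of matchings of the profile in which `v` is matched. -/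
noncomputable def dP {V : Type*} {n : ℕ} (M : Fin n → Finset (Sym2 V)) (v : V) : ℕ :=
  (Finset.univ.filter (fun i : Fin n => ∃ e ∈ M i, v ∈ e)).card

/-- The result `P Δ W` of applying the hyperwalk `W` to the profile with matchings `M`:
`M' i = (M i ∪ {e_j : j odd, s_j = i}) ∖ {e_j : j even, s_j = i}`. -/
def applyHW {V : Type*} [DecidableEq V] {n k : ℕ}
    (M : Fin n → Finset (Sym2 V)) (W : Hyperwalk V n k) : Fin n → Finset (Sym2 V) :=
  fun i => (M i ∪ W.addSet i) \ W.remSet i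

/-- `W` is an augmenting hyperwalk of the profile `(Cg, M)`: applying it again yields a
profile, `d_P` is unchanged at every vertex of the walk other than the two (distinct)
endpoints, and it increases by exactly one at each of the two endpoints. -/
def IsAugmenting {V : Type*} [DecidableEq V] {n k : ℕ}
    (Cg M : Fin n → Finset (Sym2 V)) (W : Hyperwalk V n k) : Prop :=
  0 < k ∧ W.verts 0 ≠ W.verts (Fin.last k) ∧
  IsProfile Cg (applyHW M W) ∧
  (∀ j : Fin (k + 1), W.verts j ≠ W.verts 0 → W.verts j ≠ W.verts (Fin.last k) →
      dP (applyHW M W) (W.verts j) = dP M (W.verts j)) ∧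
  dP (applyHW M W) (W.verts 0) = dP M (W.verts 0) + 1 ∧
  dP (applyHW M W) (W.verts (Fin.last k)) = dP M (W.verts (Fin.last k)) + 1


section Aux

variable {V : Type*} [DecidableEq V] [Fintype V]

lemma Hyperwalk.mem_vertSet_of_mem_edge {n k : ℕ} (W : Hyperwalk V n k)
    (j : Fin k) {v : V} (hv : v ∈ W.edge j) : v ∈ W.vertSet := by
  rw [Hyperwalk.edge, Sym2.mem_iff] at hv
  rcases hv with h | h <;>
    · rw [h]; exact Finset.mem_image_of_mem _ (Finset.mem_univ _)

lemma Hyperwalk.mem_vertSet_of_mem_addSet {n k : ℕ} (W : Hyperwalk V n k)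
    {i : Fin n} {e : Sym2 V} (he : e ∈ W.addSet i) {v : V} (hv : v ∈ e) :
    v ∈ W.vertSet := by
  rw [Hyperwalk.addSet, Finset.mem_image] at he
  obtain ⟨j, -, rfl⟩ := he
  exact W.mem_vertSet_of_mem_edge j hv

lemma Hyperwalk.mem_vertSet_of_mem_remSet {n k : ℕ} (W : Hyperwalk V n k)
    {i : Fin n} {e : Sym2 V} (he : e ∈ W.remSet i) {v : V} (hv : v ∈ e) :
    v ∈ W.vertSet := by
  rw [Hyperwalk.remSet, Finset.mem_image] at he
  obtain ⟨j, -, rfl⟩ := he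
  exact W.mem_vertSet_of_mem_edge j hv

lemma card_matched (M : Finset (Sym2 V))
    (hd : ∀ e ∈ M, ¬ e.IsDiag)
    (hm : ∀ e ∈ M, ∀ f ∈ M, ∀ v : V, v ∈ e → v ∈ f → e = f) :
    (Finset.univ.filter (fun v : V => ∃ e ∈ M, v ∈ e)).card = 2 * M.card := by
  have hset : (Finset.univ.filter (fun v : V => ∃ e ∈ M, v ∈ e))
      = M.biUnion (fun e => Finset.univ.filter (· ∈ e)) := by
    ext v; simp
  rw [hset, Finset.card_biUnion]
  · rw [Finset.sum_congr rfl (fun e he => ?_), Finset.sum_const, smul_eq_mul, mul_comm]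
    · induction e with
      | _ a b =>
        have hab : a ≠ b := by simpa [Sym2.isDiag_iff_proj_eq] using hd _ he
        have : (Finset.univ.filter (· ∈ s(a,b))) = {a, b} := by
          ext v; simp [Sym2.mem_iff]
        rw [this, Finset.card_insert_of_notMem (by simp [hab]), Finset.card_singleton]
  · intro e he f hf hef
    rw [Function.onFun, Finset.disjoint_left]
    intro v hv hv'
    simp only [Finset.mem_filter] at hv hv'
    exact hef (hm e he f hf v hv.2 hv'.2)

set_option maxHeartbeats 1000000 in
lemma sum_dP {n : ℕ} (N : Fin n → Finset (Sym2 V))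
    (hd : ∀ i, ∀ e ∈ N i, ¬ e.IsDiag)
    (hm : ∀ i, ∀ e ∈ N i, ∀ f ∈ N i, ∀ v : V, v ∈ e → v ∈ f → e = f) :
    ∑ v : V, dP N v = 2 * ∑ i : Fin n, (N i).card := by
  unfold dP
  have h2 : ∀ i : Fin n, 2 * (N i).card
      = (Finset.univ.filter (fun v : V => ∃ e ∈ N i, v ∈ e)).card :=
    fun i => (card_matched (N i) (hd i) (hm i)).symm
  rw [Finset.mul_sum, Finset.sum_congr rfl (fun i _ => h2 i)]
  simp_rw [Finset.card_filter]
  rw [Finset.sum_comm (s := (Finset.univ : Finset V)) (t := (Finset.univ : Finset (Fin n)))]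
  congr!

end Aux

/-- Let `P = ((𝒞₀,M₀),…,(𝒞_α,M_α))` be a profile and `I = {W_1,…,W_m}` a
collection of pairwise vertex-disjoint augmenting hyperwalks of `P` (each a walk in the
graph `C`).  Applying all hyperwalks of `I` yields a profile `P'` with
`Σ_i |M'_i| = Σ_i |M_i| + |I|`. -/
theorem stmt_8 {V : Type*} [DecidableEq V] [Fintype V] (n m : ℕ)
    (C : SimpleGraph V)
    (Cg M : Fin n → Finset (Sym2 V))
    (hprof : IsProfile Cg M)
    (W : Fin m → Σ k : ℕ, Hyperwalk V n k)
    (hwalk : ∀ t, ∀ j : Fin (W t).1,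
      C.Adj ((W t).2.verts j.castSucc) ((W t).2.verts j.succ))
    (haug : ∀ t, IsAugmenting Cg M (W t).2)
    (hdisj : ∀ t t', t ≠ t' → Disjoint ((W t).2.vertSet) ((W t').2.vertSet)) :
    ∑ i : Fin n,
        ((M i ∪ Finset.univ.sup (fun t => (W t).2.addSet i))
            \ Finset.univ.sup (fun t => (W t).2.remSet i)).card
      = (∑ i : Fin n, (M i).card) + m := by
  classical
  set As : Fin n → Finset (Sym2 V) := fun i => Finset.univ.sup (fun t => (W t).2.addSet i)
    with hAs
  set Rs : Fin n → Finset (Sym2 V) := fun i => Finset.univ.sup (fun t => (W t).2.remSet i)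
    with hRs
  set A : Fin n → Finset (Sym2 V) := fun i => (M i ∪ As i) \ Rs i with hA
  show ∑ i : Fin n, (A i).card = (∑ i : Fin n, (M i).card) + m
  -- basic membership facts
  have hdisj' : ∀ t t' (v : V), v ∈ (W t).2.vertSet → v ∈ (W t').2.vertSet → t = t' := by
    intro t t' v h h'
    by_contra hne
    exact (Finset.disjoint_left.mp (hdisj t t' hne) h) h'
  -- core: a vertex in the walk t sees exactly the edges of applyHW at t
  have hcore1 : ∀ (v : V) (t : Fin m) (i : Fin n), v ∈ (W t).2.vertSet →
      ∀ e, v ∈ e → (e ∈ A i ↔ e ∈ applyHW M (W t).2 i) := by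
    intro v t i hv e hve
    simp only [hA, hAs, hRs, applyHW, Finset.mem_sdiff, Finset.mem_union, Finset.mem_sup,
      Finset.mem_univ, true_and, exists_true_left]
    constructor
    · rintro ⟨h1 | ⟨t', h1⟩, h2⟩
      · exact ⟨Or.inl h1, fun h => h2 ⟨t, h⟩⟩
      · have : t' = t := (hdisj' t' t v ((W t').2.mem_vertSet_of_mem_addSet h1 hve) hv).symm ▸ rfl
        have ht : t' = t := hdisj' t' t v ((W t').2.mem_vertSet_of_mem_addSet h1 hve) hv
        subst ht
        exact ⟨Or.inr h1, fun h => h2 ⟨t', h⟩⟩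
    · rintro ⟨h1 | h1, h2⟩
      · refine ⟨Or.inl h1, ?_⟩
        rintro ⟨t', h'⟩
        have ht : t' = t := hdisj' t' t v ((W t').2.mem_vertSet_of_mem_remSet h' hve) hv
        exact h2 (ht ▸ h')
      · refine ⟨Or.inr ⟨t, h1⟩, ?_⟩
        rintro ⟨t', h'⟩
        have ht : t' = t := hdisj' t' t v ((W t').2.mem_vertSet_of_mem_remSet h' hve) hv
        exact h2 (ht ▸ h')
  have hcore2 : ∀ (v : V) (i : Fin n), (∀ t, v ∉ (W t).2.vertSet) →
      ∀ e, v ∈ e → (e ∈ A i ↔ e ∈ M i) := by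
    intro v i hv e hve
    simp only [hA, hAs, hRs, Finset.mem_sdiff, Finset.mem_union, Finset.mem_sup,
      Finset.mem_univ, true_and, exists_true_left]
    constructor
    · rintro ⟨h1 | ⟨t', h1⟩, h2⟩
      · exact h1
      · exact absurd ((W t').2.mem_vertSet_of_mem_addSet h1 hve) (hv t')
    · intro h1
      refine ⟨Or.inl h1, ?_⟩
      rintro ⟨t', h'⟩
      exact (hv t') ((W t').2.mem_vertSet_of_mem_remSet h' hve)
  -- every edge of A i is an edge of some applyHW or of M i
  have hedge : ∀ (i : Fin n) (e : Sym2 V), e ∈ A i →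
      e ∈ M i ∨ ∃ t, e ∈ applyHW M (W t).2 i := by
    intro i e he
    simp only [hA, hAs, hRs, Finset.mem_sdiff, Finset.mem_union, Finset.mem_sup,
      Finset.mem_univ, true_and, exists_true_left] at he
    obtain ⟨h1 | ⟨t, h1⟩, h2⟩ := he
    · exact Or.inl h1
    · refine Or.inr ⟨t, ?_⟩
      simp only [applyHW, Finset.mem_sdiff, Finset.mem_union]
      exact ⟨Or.inr h1, fun h => h2 ⟨t, h⟩⟩
  -- A is a matching family
  have hAd : ∀ i, ∀ e ∈ A i, ¬ e.IsDiag := by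
    intro i e he
    rcases hedge i e he with h | ⟨t, h⟩
    · exact (hprof i).2.1 e h
    · exact ((haug t).2.2.1 i).2.1 e h
  have hAm : ∀ i, ∀ e ∈ A i, ∀ f ∈ A i, ∀ v : V, v ∈ e → v ∈ f → e = f := by
    intro i e he f hf v hve hvf
    by_cases hv : ∃ t, v ∈ (W t).2.vertSet
    · obtain ⟨t, hv⟩ := hv
      have he' := (hcore1 v t i hv e hve).mp he
      have hf' := (hcore1 v t i hv f hvf).mp hf
      exact ((haug t).2.2.1 i).2.2 e he' f hf' v hve hvf
    · push_neg at hv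
      have he' := (hcore2 v i hv e hve).mp he
      have hf' := (hcore2 v i hv f hvf).mp hf
      exact (hprof i).2.2 e he' f hf' v hve hvf
  -- dP of A at vertices
  have hdA1 : ∀ (v : V) (t : Fin m), v ∈ (W t).2.vertSet →
      dP A v = dP (applyHW M (W t).2) v := by
    intro v t hv
    unfold dP
    congr 1
    ext i
    simp only [Finset.mem_filter, Finset.mem_univ, true_and]
    constructor
    · rintro ⟨e, he, hve⟩; exact ⟨e, (hcore1 v t i hv e hve).mp he, hve⟩
    · rintro ⟨e, he, hve⟩; exact ⟨e, (hcore1 v t i hv e hve).mpr he, hve⟩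
  have hdA2 : ∀ (v : V), (∀ t, v ∉ (W t).2.vertSet) → dP A v = dP M v := by
    intro v hv
    unfold dP
    congr 1
    ext i
    simp only [Finset.mem_filter, Finset.mem_univ, true_and]
    constructor
    · rintro ⟨e, he, hve⟩; exact ⟨e, (hcore2 v i hv e hve).mp he, hve⟩
    · rintro ⟨e, he, hve⟩; exact ⟨e, (hcore2 v i hv e hve).mpr he, hve⟩
  -- per-walk sum over its vertex set
  have hwsum : ∀ t : Fin m,
      ∑ v ∈ (W t).2.vertSet, dP A v = (∑ v ∈ (W t).2.vertSet, dP M v) + 2 := by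
    intro t
    obtain ⟨-, hab, -, hmid, ha, hb⟩ := haug t
    set a := (W t).2.verts 0 with hadef
    set b := (W t).2.verts (Fin.last (W t).1) with hbdef
    have haS : a ∈ (W t).2.vertSet := Finset.mem_image_of_mem _ (Finset.mem_univ _)
    have hbS : b ∈ (W t).2.vertSet := Finset.mem_image_of_mem _ (Finset.mem_univ _)
    have hsub : ({a, b} : Finset V) ⊆ (W t).2.vertSet := by
      intro x hx
      rcases Finset.mem_insert.mp hx with h | h
      · exact h ▸ haS
      · exact (Finset.mem_singleton.mp h) ▸ hbS
    have hrw : ∀ v ∈ (W t).2.vertSet, dP A v = dP (applyHW M (W t).2) v :=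
      fun v hv => hdA1 v t hv
    rw [Finset.sum_congr rfl hrw]
    rw [← Finset.sum_sdiff hsub, ← Finset.sum_sdiff (f := dP M) hsub]
    have hmidsum : ∑ v ∈ (W t).2.vertSet \ {a, b}, dP (applyHW M (W t).2) v
        = ∑ v ∈ (W t).2.vertSet \ {a, b}, dP M v := by
      refine Finset.sum_congr rfl (fun v hv => ?_)
      rw [Finset.mem_sdiff] at hv
      obtain ⟨hv1, hv2⟩ := hv
      simp only [Finset.mem_insert, Finset.mem_singleton, not_or] at hv2
      obtain ⟨j, -, rfl⟩ := Finset.mem_image.mp hv1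
      exact hmid j hv2.1 hv2.2
    rw [hmidsum, Finset.sum_pair hab, Finset.sum_pair hab, ha, hb]
    omega
  -- total sum of dP
  have hdisjP : Set.PairwiseDisjoint (↑(Finset.univ : Finset (Fin m)))
      (fun t => (W t).2.vertSet) := fun t _ t' _ hne => hdisj t t' hne
  set B : Finset V := Finset.univ.biUnion (fun t => (W t).2.vertSet) with hB
  have hsplitA : ∑ v : V, dP A v = ∑ v ∈ Finset.univ \ B, dP A v + ∑ v ∈ B, dP A v :=
    (Finset.sum_sdiff (Finset.subset_univ B)).symm
  have hsplitM : ∑ v : V, dP M v = ∑ v ∈ Finset.univ \ B, dP M v + ∑ v ∈ B, dP M v :=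
    (Finset.sum_sdiff (Finset.subset_univ B)).symm
  have hout : ∑ v ∈ Finset.univ \ B, dP A v = ∑ v ∈ Finset.univ \ B, dP M v := by
    refine Finset.sum_congr rfl (fun v hv => ?_)
    rw [Finset.mem_sdiff, hB] at hv
    refine hdA2 v (fun t ht => hv.2 ?_)
    exact Finset.mem_biUnion.mpr ⟨t, Finset.mem_univ t, ht⟩
  have hinA : ∑ v ∈ B, dP A v = ∑ t : Fin m, ∑ v ∈ (W t).2.vertSet, dP A v :=
    Finset.sum_biUnion hdisjP
  have hinM : ∑ v ∈ B, dP M v = ∑ t : Fin m, ∑ v ∈ (W t).2.vertSet, dP M v :=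
    Finset.sum_biUnion hdisjP
  have hin : ∑ v ∈ B, dP A v = ∑ v ∈ B, dP M v + 2 * m := by
    rw [hinA, hinM, Finset.sum_congr rfl (fun t _ => hwsum t), Finset.sum_add_distrib]
    simp [mul_comm]
  have htotal : ∑ v : V, dP A v = ∑ v : V, dP M v + 2 * m := by
    rw [hsplitA, hsplitM, hout, hin]; ring
  -- convert to cardinalities
  have hAcard : ∑ v : V, dP A v = 2 * ∑ i : Fin n, (A i).card := sum_dP A hAd hAm
  have hMcard : ∑ v : V, dP M v = 2 * ∑ i : Fin n, (M i).card :=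
    sum_dP M (fun i => (hprof i).2.1) (fun i => (hprof i).2.2)
  rw [hAcard, hMcard] at htotal
  omega
end

section
/- Let H be a graph of maximum degree Δ on n vertices, and suppose an independent set I of H is such that every vertex of H is, with probability at least 1 − ε/(10Δ), 'decided' (i.e. in I or adjacent to I). Let I' be any maximal independent set containing I obtained by adding only undecided vertices. Then E[|I|] ≥ (1−ε)·E[|I'|], provided ε ≤ 1. -/
open MeasureTheory ENNReal

/-- Let `H` have maximum degree at most `Δ` and let `I` be a random
independent set such that every vertex is decided (in `I` or adjacent to `I`) with
probability at least `1 − ε/(10Δ)`.  If `I'` is a maximal independent set obtained from `I`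
by adding only undecided vertices, then `E[|I|] ≥ (1−ε)·E[|I'|]` (for `ε ≤ 1`). -/
theorem stmt_12 {V Ω : Type*} [Fintype V] [DecidableEq V] [MeasurableSpace Ω]
    (μ : Measure Ω) [IsProbabilityMeasure μ]
    (H : SimpleGraph V) [DecidableRel H.Adj]
    (Δ : ℕ) (hΔ : 1 ≤ Δ) (hdeg : H.maxDegree ≤ Δ)
    (ε : ℝ) (hε : 0 < ε) (hε1 : ε ≤ 1)
    (I I' : Ω → Finset V)
    (hIind : ∀ ω, ∀ u ∈ I ω, ∀ v ∈ I ω, ¬ H.Adj u v)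
    (hI'ind : ∀ ω, ∀ u ∈ I' ω, ∀ v ∈ I' ω, ¬ H.Adj u v)
    (hsub : ∀ ω, I ω ⊆ I' ω)
    (hmeasdec : ∀ v : V, MeasurableSet {ω | v ∈ I ω ∨ ∃ u ∈ I ω, H.Adj v u})
    (hdec : ∀ v : V,
      ENNReal.ofReal (1 - ε / (10 * Δ)) ≤ μ {ω | v ∈ I ω ∨ ∃ u ∈ I ω, H.Adj v u})
    (hadd : ∀ ω, ∀ v ∈ I' ω, v ∉ I ω → ¬ (v ∈ I ω ∨ ∃ u ∈ I ω, H.Adj v u))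
    (hmax : ∀ ω, ∀ v : V, v ∉ I' ω → ∃ u ∈ I' ω, H.Adj v u)
    (hint : Integrable (fun ω => ((I ω).card : ℝ)) μ)
    (hint' : Integrable (fun ω => ((I' ω).card : ℝ)) μ) :
    (1 - ε) * ∫ ω, ((I' ω).card : ℝ) ∂μ ≤ ∫ ω, ((I ω).card : ℝ) ∂μ := by
  classical
  set n := Fintype.card V with hn
  set D : V → Set Ω := fun v => {ω | v ∈ I ω ∨ ∃ u ∈ I ω, H.Adj v u} with hD
  have hΔR : (1:ℝ) ≤ (Δ:ℝ) := by exact_mod_cast hΔ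
  have h10 : (0:ℝ) < 10 * Δ := by positivity
  have hfrac : ε / (10 * Δ) ≤ 1 := by
    rw [div_le_one h10]; nlinarith
  have h1 : (0:ℝ) ≤ 1 - ε / (10 * Δ) := by linarith
  -- probability of being undecided
  have hU : ∀ v, (μ (D v)ᶜ).toReal ≤ ε / (10 * Δ) := by
    intro v
    rw [prob_compl_eq_one_sub (hmeasdec v)]
    have h := hdec v
    have hle : ENNReal.ofReal (1 - ε / (10 * Δ)) ≤ μ (D v) := h
    have hfin : μ (D v) ≤ 1 := prob_le_one
    have : (1:ℝ≥0∞) - μ (D v) ≤ 1 - ENNReal.ofReal (1 - ε / (10 * Δ)) :=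
      tsub_le_tsub_left hle 1
    calc (1 - μ (D v)).toReal ≤ ((1:ℝ≥0∞) - ENNReal.ofReal (1 - ε / (10 * Δ))).toReal := by
          apply ENNReal.toReal_mono _ this
          simp
      _ ≤ ε / (10 * Δ) := by
          rw [← ENNReal.ofReal_one, ← ENNReal.ofReal_sub _ h1]
          rw [ENNReal.toReal_ofReal (by linarith [div_nonneg hε.le h10.le])]
          linarith
  -- pointwise: |I'| ≤ |I| + #undecided
  have hpt : ∀ ω, ((I' ω).card : ℝ) ≤ (I ω).card +
      ∑ v : V, Set.indicator (D v)ᶜ (fun _ => (1:ℝ)) ω := by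
    intro ω
    have hsub2 : I' ω ⊆ I ω ∪ Finset.univ.filter (fun v => ω ∈ (D v)ᶜ) := by
      intro v hv
      by_cases h : v ∈ I ω
      · exact Finset.mem_union_left _ h
      · refine Finset.mem_union_right _ ?_
        simp only [Finset.mem_filter, Finset.mem_univ, true_and]
        exact hadd ω v hv h
    have h1' := Finset.card_le_card hsub2
    have h2 := Finset.card_union_le (I ω) (Finset.univ.filter (fun v => ω ∈ (D v)ᶜ))
    have h3 : ((Finset.univ.filter (fun v => ω ∈ (D v)ᶜ)).card : ℝ) =
        ∑ v : V, Set.indicator (D v)ᶜ (fun _ => (1:ℝ)) ω := by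
      rw [Finset.card_filter]
      push_cast
      refine Finset.sum_congr rfl fun v _ => ?_
      by_cases h : ω ∈ (D v)ᶜ <;> simp [h]
    have := h1'.trans h2
    calc ((I' ω).card : ℝ) ≤ ((I ω).card + (Finset.univ.filter (fun v => ω ∈ (D v)ᶜ)).card : ℕ) := by
          exact_mod_cast this
      _ = (I ω).card + ∑ v : V, Set.indicator (D v)ᶜ (fun _ => (1:ℝ)) ω := by
          push_cast [← h3]; ring
  -- integrability of the indicator sum
  have hindint : ∀ v : V, Integrable (Set.indicator (D v)ᶜ (fun _ => (1:ℝ))) μ := by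
    intro v
    exact (integrable_const (1:ℝ)).indicator (hmeasdec v).compl
  have hgint : Integrable (fun ω => ∑ v : V, Set.indicator (D v)ᶜ (fun _ => (1:ℝ)) ω) μ :=
    integrable_finset_sum _ fun v _ => hindint v
  -- integral bound
  have hEB : ∫ ω, ((I' ω).card : ℝ) ∂μ ≤ ∫ ω, ((I ω).card : ℝ) ∂μ + n * (ε / (10 * Δ)) := by
    have h1' : ∫ ω, ((I' ω).card : ℝ) ∂μ ≤
        ∫ ω, (((I ω).card : ℝ) + ∑ v : V, Set.indicator (D v)ᶜ (fun _ => (1:ℝ)) ω) ∂μ :=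
      integral_mono hint' (hint.add hgint) hpt
    rw [integral_add hint hgint, integral_finset_sum _ fun v _ => hindint v] at h1'
    have h2' : ∑ v : V, ∫ ω, Set.indicator (D v)ᶜ (fun _ => (1:ℝ)) ω ∂μ ≤ n * (ε / (10 * Δ)) := by
      have : ∀ v : V, ∫ ω, Set.indicator (D v)ᶜ (fun _ => (1:ℝ)) ω ∂μ ≤ ε / (10 * Δ) := by
        intro v
        rw [integral_indicator_const (1:ℝ) (hmeasdec v).compl]
        simp only [smul_eq_mul, mul_one]; exact hU v
      calc ∑ v : V, ∫ ω, Set.indicator (D v)ᶜ (fun _ => (1:ℝ)) ω ∂μ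
          ≤ ∑ _v : V, ε / (10 * Δ) := Finset.sum_le_sum fun v _ => this v
        _ = n * (ε / (10 * Δ)) := by simp [hn, mul_comm]
    linarith
  -- pointwise: n ≤ (Δ+1) * |I'|
  have hcov : ∀ ω, (n : ℝ) ≤ ((Δ:ℝ) + 1) * (I' ω).card := by
    intro ω
    set f : V → V := fun v => if h : v ∈ I' ω then v else (hmax ω v h).choose with hf
    have hfmem : ∀ v, f v ∈ I' ω := by
      intro v
      by_cases h : v ∈ I' ω
      · simpa [hf, h]
      · simpa [hf, h] using (hmax ω v h).choose_spec.1
    have hfadj : ∀ v, f v = v ∨ H.Adj v (f v) := by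
      intro v
      by_cases h : v ∈ I' ω
      · left; simp [hf, h]
      · right; simpa [hf, h] using (hmax ω v h).choose_spec.2
    have key : (Finset.univ : Finset V).card ≤ (Δ + 1) * (I' ω).card := by
      apply Finset.card_le_mul_card_image_of_maps_to (fun v _ => hfmem v)
      intro a _
      have hsubfib : Finset.univ.filter (fun x => f x = a) ⊆ insert a (H.neighborFinset a) := by
        intro x hx
        simp only [Finset.mem_filter] at hx
        rcases hfadj x with h | h
        · have hxa : x = a := h.symm.trans hx.2
          rw [hxa]; exact Finset.mem_insert_self a _
        · rw [hx.2] at h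
          simp [Finset.mem_insert, H.mem_neighborFinset, h.symm]
      calc (Finset.univ.filter (fun x => f x = a)).card ≤ (insert a (H.neighborFinset a)).card :=
            Finset.card_le_card hsubfib
        _ ≤ (H.neighborFinset a).card + 1 := Finset.card_insert_le _ _
        _ ≤ Δ + 1 := by
            have := (H.degree_le_maxDegree a).trans hdeg
            rw [← H.card_neighborFinset_eq_degree] at this
            omega
    rw [Finset.card_univ] at key
    have : (n:ℝ) ≤ ((Δ + 1) * (I' ω).card : ℕ) := by exact_mod_cast key
    push_cast at this
    linarith
  -- integrate the covering bound
  have hEn : (n : ℝ) ≤ ((Δ:ℝ) + 1) * ∫ ω, ((I' ω).card : ℝ) ∂μ := by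
    have := integral_mono (integrable_const ((n:ℝ))) (hint'.const_mul ((Δ:ℝ)+1)) hcov
    rwa [integral_const, probReal_univ, one_smul, integral_const_mul] at this
  have hB0 : 0 ≤ ∫ ω, ((I' ω).card : ℝ) ∂μ := by
    have hn0 : (0:ℝ) ≤ n := Nat.cast_nonneg n
    nlinarith
  set A := ∫ ω, ((I ω).card : ℝ) ∂μ
  set B := ∫ ω, ((I' ω).card : ℝ) ∂μ
  have hnB : (n:ℝ) * (ε / (10 * Δ)) ≤ ε * B := by
    have h1' : (n:ℝ) * (ε / (10 * Δ)) ≤ ((Δ:ℝ)+1) * B * (ε / (10 * Δ)) := by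
      apply mul_le_mul_of_nonneg_right hEn (by positivity)
    have h2' : ((Δ:ℝ)+1) * B * (ε / (10 * Δ)) ≤ ε * B := by
      rw [← mul_div_assoc, div_le_iff₀ h10]
      nlinarith [mul_nonneg (mul_nonneg hε.le hB0) (by linarith : (0:ℝ) ≤ 9*(Δ:ℝ) - 1)]
    linarith
  linarith
end

section
/- Fix a vertex v and suppose: (i) X_v, and the events {u matched in Z} for each neighbor u, together with edge realizations, satisfy that for each relevant edge e_i = {v, u_i} the indicator of 'e_i realized and u_i unmatched' is independent of 'v unmatched', with Pr[e_i realized] = p_{e_i} and Pr[u_i matched] = Pr[X_{u_i}]; (ii) conditioned on v unmatched, x_v = Σ_i x_{e_i} where x_{e_i} = f_{e_i}/(p_{e_i}(1−Pr[X_v])(1−Pr[X_{u_i}])) when e_i is realized and u_i is unmatched, and 0 otherwise; (iii) Σ_i E[f_{e_i}] ≤ n_v and Pr[X_v] ≤ c_v with n_v + c_v ≤ 1. Then E[x_v | v unmatched] ≤ 1. -/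
open MeasureTheory ProbabilityTheory

/-- With `Xv` the event that `v` is matched in `Z`, `Xu i` the event that
the neighbor `u_i` is matched, `Re i` the event that the non-crucial edge `e_i = {v,u_i}` is
realized (probability `p i`), and `f i` random variables independent of everything, where
`x_{e_i} = f_i/(p_i(1−Pr[Xv])(1−Pr[Xu_i]))` on the event `Re i ∩ (Xu i)ᶜ` and `0` otherwise,
if `Σ_i E[f_i] ≤ n_v`, `Pr[Xv] ≤ c_v` and `n_v + c_v ≤ 1`, then
`E[x_v | v unmatched] ≤ 1`. -/
theorem stmt_16 {Ω : Type*} [MeasurableSpace Ω] (μ : Measure Ω) [IsProbabilityMeasure μ]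
    (r : ℕ) (Xv : Set Ω) (Xu Re : Fin r → Set Ω) (f : Fin r → Ω → ℝ)
    (p : Fin r → ℝ) (cv nv : ℝ)
    (hXv : MeasurableSet Xv) (hXu : ∀ i, MeasurableSet (Xu i))
    (hRe : ∀ i, MeasurableSet (Re i))
    (hp : ∀ i, 0 < p i ∧ p i ≤ 1)
    (hpRe : ∀ i, μ (Re i) = ENNReal.ofReal (p i))
    (hf0 : ∀ i ω, 0 ≤ f i ω) (hfint : ∀ i, Integrable (f i) μ)
    (hprob : ∀ i, μ (Re i ∩ (Xu i)ᶜ ∩ Xvᶜ)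
      = ENNReal.ofReal (p i * (1 - (μ (Xu i)).toReal) * (1 - (μ Xv).toReal)))
    (hfind : ∀ i, ∫ ω in Re i ∩ (Xu i)ᶜ ∩ Xvᶜ, f i ω ∂μ
      = (∫ ω, f i ω ∂μ) * (μ (Re i ∩ (Xu i)ᶜ ∩ Xvᶜ)).toReal)
    (hnv : (∑ i, ∫ ω, f i ω ∂μ) ≤ nv)
    (hcv : (μ Xv).toReal ≤ cv)
    (h0n : 0 ≤ nv) (h0c : 0 ≤ cv) (hsum : nv + cv ≤ 1) :
    ∫ ω, (∑ i, (Re i ∩ (Xu i)ᶜ).indicator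
        (fun ω' => f i ω' / (p i * (1 - (μ Xv).toReal) * (1 - (μ (Xu i)).toReal))) ω)
      ∂(ProbabilityTheory.cond μ Xvᶜ) ≤ 1 := by
  by_cases hz : μ Xvᶜ = 0
  · simp [ProbabilityTheory.cond, Measure.restrict_eq_zero.mpr hz]
  -- notation
  set Pv := (μ Xv).toReal with hPvdef
  have hfin : ∀ s : Set Ω, μ s ≠ ⊤ := fun s => measure_ne_top μ s
  have hcompl : (μ Xvᶜ).toReal = 1 - Pv := by
    rw [measure_compl hXv (hfin Xv), measure_univ,
      ENNReal.toReal_sub_of_le prob_le_one (by simp)]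
    simp [hPvdef]
  have hPvlt : Pv < 1 := by
    have h1 : 0 < (μ Xvᶜ).toReal := ENNReal.toReal_pos hz (hfin _)
    linarith [hcompl ▸ h1]
  have hEf0 : ∀ i, 0 ≤ ∫ ω, f i ω ∂μ := fun i => integral_nonneg (hf0 i)
  -- integrability of each summand under restrict
  have hmeasS : ∀ i : Fin r, MeasurableSet (Re i ∩ (Xu i)ᶜ) :=
    fun i => (hRe i).inter (hXu i).compl
  have hintS : ∀ i : Fin r, Integrable ((Re i ∩ (Xu i)ᶜ).indicator
      (fun ω' => f i ω' / (p i * (1 - Pv) * (1 - (μ (Xu i)).toReal)))) (μ.restrict Xvᶜ) := by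
    intro i
    refine (Integrable.indicator ?_ (hmeasS i)).restrict
    simpa [div_eq_mul_inv] using (hfint i).mul_const
      ((p i * (1 - Pv) * (1 - (μ (Xu i)).toReal))⁻¹)
  rw [ProbabilityTheory.cond, integral_smul_measure, integral_finset_sum _ (fun i _ => hintS i)]
  -- compute each term
  have hterm : ∀ i : Fin r,
      ∫ ω, ((Re i ∩ (Xu i)ᶜ).indicator
        (fun ω' => f i ω' / (p i * (1 - Pv) * (1 - (μ (Xu i)).toReal)))) ω ∂(μ.restrict Xvᶜ)
      ≤ ∫ ω, f i ω ∂μ := by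
    intro i
    rw [integral_indicator (hmeasS i), Measure.restrict_restrict (hmeasS i)]
    set K := p i * (1 - Pv) * (1 - (μ (Xu i)).toReal) with hK
    have : ∫ ω in Re i ∩ (Xu i)ᶜ ∩ Xvᶜ, f i ω / K ∂μ
        = (∫ ω in Re i ∩ (Xu i)ᶜ ∩ Xvᶜ, f i ω ∂μ) / K := integral_div K _
    rw [this, hfind i]
    have hPu : 0 ≤ 1 - (μ (Xu i)).toReal := by
      have : (μ (Xu i)).toReal ≤ 1 := by
        simpa using ENNReal.toReal_mono ENNReal.one_ne_top prob_le_one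
      linarith
    by_cases hK0 : K = 0
    · rw [hK0, div_zero]; exact hEf0 i
    · have hμS : (μ (Re i ∩ (Xu i)ᶜ ∩ Xvᶜ)).toReal = K := by
        rw [hprob i, ENNReal.toReal_ofReal
          (mul_nonneg (mul_nonneg (hp i).1.le hPu) (by linarith))]
        rw [hK]; ring
      rw [hμS, mul_div_assoc, div_self hK0, mul_one]
  rw [smul_eq_mul, ENNReal.toReal_inv, hcompl, inv_mul_eq_div, div_le_one (by linarith)]
  calc (∑ i, ∫ ω in Xvᶜ, ((Re i ∩ (Xu i)ᶜ).indicator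
        (fun ω' => f i ω' / (p i * (1 - Pv) * (1 - (μ (Xu i)).toReal)))) ω ∂μ)
      ≤ ∑ i, ∫ ω, f i ω ∂μ := Finset.sum_le_sum fun i _ => hterm i
    _ ≤ nv := hnv
    _ ≤ 1 - Pv := by linarith
end
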